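/- arXiv:1910.03859 — 7 statements merged into one kernel-verified Lean document; each statement's English description precedes it below -/
import Mathlib

section
/- Let k be a field and λ ∈ k with λ ≠ 0 and λ ≠ 1. Set z = x − y², z' = x − λy², F = x·z·z' in k[x,y]. Let Q_a(2) be the 6×6 matrix over k[x,y] with rows (z, 0, 0, 0, 0, 0), (0, xz, 0, 0, 0, 0), (0, 0, xz, 0, 0, 0), (−xy, 0, 0, xz', 0, 0), (0, −xy, 0, 0, xz', 0), (0, 0, −xy, 0, 0, xz'). Then there exists a 6×6 matrix B over k[x,y] such that Q_a(2)·B = B·Q_a(2) = F·I₆; that is, (Q_a(2), B) is a matrix factorization of F. -/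
open MvPolynomial

noncomputable section

namespace T36

variable {k : Type} [Field k]

/-- `x = X 0` in `k[x,y]`. -/
def x : MvPolynomial (Fin 2) k := X 0
/-- `y = X 1` in `k[x,y]`. -/
def y : MvPolynomial (Fin 2) k := X 1
/-- `z = x - y²`. -/
def z : MvPolynomial (Fin 2) k := x - y ^ 2
/-- `z' = x - λ y²`. -/
def z' (lam : k) : MvPolynomial (Fin 2) k := x - C lam * y ^ 2
/-- `F = x z z'`. -/
def F (lam : k) : MvPolynomial (Fin 2) k := x * z * z' lam

/-- The matrix `Q_a(2)`. -/
def Qa2 (lam : k) : Matrix (Fin 6) (Fin 6) (MvPolynomial (Fin 2) k) :=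
  !![z, 0, 0, 0, 0, 0;
     0, x * z, 0, 0, 0, 0;
     0, 0, x * z, 0, 0, 0;
     -(x * y), 0, 0, x * z' lam, 0, 0;
     0, -(x * y), 0, 0, x * z' lam, 0;
     0, 0, -(x * y), 0, 0, x * z' lam]

end T36

section Aux
variable {R : Type*} (a : R)
lemma c6_1 (u : Fin 5 → R) : Matrix.vecCons a u 1 = u 0 := rfl
lemma c6_2 (u : Fin 5 → R) : Matrix.vecCons a u 2 = u 1 := rfl
lemma c6_3 (u : Fin 5 → R) : Matrix.vecCons a u 3 = u 2 := rfl
lemma c6_4 (u : Fin 5 → R) : Matrix.vecCons a u 4 = u 3 := rfl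
lemma c6_5 (u : Fin 5 → R) : Matrix.vecCons a u 5 = u 4 := rfl
lemma c5_1 (u : Fin 4 → R) : Matrix.vecCons a u 1 = u 0 := rfl
lemma c5_2 (u : Fin 4 → R) : Matrix.vecCons a u 2 = u 1 := rfl
lemma c5_3 (u : Fin 4 → R) : Matrix.vecCons a u 3 = u 2 := rfl
lemma c5_4 (u : Fin 4 → R) : Matrix.vecCons a u 4 = u 3 := rfl
lemma c4_1 (u : Fin 3 → R) : Matrix.vecCons a u 1 = u 0 := rfl
lemma c4_2 (u : Fin 3 → R) : Matrix.vecCons a u 2 = u 1 := rfl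
lemma c4_3 (u : Fin 3 → R) : Matrix.vecCons a u 3 = u 2 := rfl
lemma c3_1 (u : Fin 2 → R) : Matrix.vecCons a u 1 = u 0 := rfl
lemma c3_2 (u : Fin 2 → R) : Matrix.vecCons a u 2 = u 1 := rfl
lemma c2_1 (u : Fin 1 → R) : Matrix.vecCons a u 1 = u 0 := rfl
end Aux

set_option maxHeartbeats 2000000 in
theorem T36_Qa2_matrix_factorization (k : Type) [Field k] (lam : k)
    (h0 : lam ≠ 0) (h1 : lam ≠ 1) :
    ∃ B : Matrix (Fin 6) (Fin 6) (MvPolynomial (Fin 2) k),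
      T36.Qa2 lam * B = T36.F lam • (1 : Matrix (Fin 6) (Fin 6) (MvPolynomial (Fin 2) k)) ∧
      B * T36.Qa2 lam = T36.F lam • (1 : Matrix (Fin 6) (Fin 6) (MvPolynomial (Fin 2) k)) := by
  refine ⟨!![T36.x * T36.z' lam, 0, 0, 0, 0, 0;
     0, T36.z' lam, 0, 0, 0, 0;
     0, 0, T36.z' lam, 0, 0, 0;
     T36.x * T36.y, 0, 0, T36.z, 0, 0;
     0, T36.y, 0, 0, T36.z, 0;
     0, 0, T36.y, 0, 0, T36.z], ?_, ?_⟩ <;>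
  · apply Matrix.ext
    intro i j
    fin_cases i <;> fin_cases j <;>
      · simp [T36.Qa2, Matrix.mul_apply, Fin.sum_univ_six, Matrix.one_apply,
          Matrix.cons_val_zero, c6_1, c6_2, c6_3, c6_4, c6_5, c5_1, c5_2, c5_3, c5_4,
          c4_1, c4_2, c4_3, c3_1, c3_2, c2_1]
        try simp only [T36.F, T36.z, T36.z']
        try ring
        try exact Or.inr rfl
end
end

section
/- Let k be a field and λ ∈ k with λ ≠ 0 and λ ≠ 1. Set z = x − y², z' = x − λy², F = x·z·z' in k[x,y]. Let Q be the 5×5 matrix over k[x,y] obtained from Q_a(2) by deleting its first row and first column, namely the matrix with rows (xz, 0, 0, 0, 0), (0, xz, 0, 0, 0), (0, 0, xz', 0, 0), (−xy, 0, 0, xz', 0), (0, −xy, 0, 0, xz'). Then there exists a 5×5 matrix B over k[x,y] such that Q·B = B·Q = F·I₅; that is, (Q, B) is a matrix factorization of F (corresponding to the word ã₂ ∼ a₂ − c₃). -/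
open MvPolynomial

noncomputable section

namespace T36

variable {k : Type} [Field k]

/-- The matrix obtained from `Q_a(2)` by deleting its first row and first column
(corresponding to the word `ã₂ ∼ a₂ − c₃`). -/
def Qa2del1 (lam : k) : Matrix (Fin 5) (Fin 5) (MvPolynomial (Fin 2) k) :=
  !![x * z, 0, 0, 0, 0;
     0, x * z, 0, 0, 0;
     0, 0, x * z' lam, 0, 0;
     -(x * y), 0, 0, x * z' lam, 0;
     0, -(x * y), 0, 0, x * z' lam]

end T36

set_option maxHeartbeats 2000000 in
theorem T36_Qa2_del_first_matrix_factorization (k : Type) [Field k] (lam : k)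
    (h0 : lam ≠ 0) (h1 : lam ≠ 1) :
    ∃ B : Matrix (Fin 5) (Fin 5) (MvPolynomial (Fin 2) k),
      T36.Qa2del1 lam * B = T36.F lam • (1 : Matrix (Fin 5) (Fin 5) (MvPolynomial (Fin 2) k)) ∧
      B * T36.Qa2del1 lam = T36.F lam • (1 : Matrix (Fin 5) (Fin 5) (MvPolynomial (Fin 2) k)) := by
  refine ⟨!![T36.z' lam, 0, 0, 0, 0;
     0, T36.z' lam, 0, 0, 0;
     0, 0, T36.z, 0, 0;
     T36.y, 0, 0, T36.z, 0;
     0, T36.y, 0, 0, T36.z], ?_, ?_⟩ <;>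
  · apply Matrix.ext
    intro i j
    fin_cases i <;> fin_cases j <;>
      · simp [T36.Qa2del1, Matrix.mul_apply, Fin.sum_univ_five, T36.F, Matrix.vecHead, Matrix.vecTail]
        try ring
end
end

section
/- Let k be a field and λ ∈ k with λ ≠ 0 and λ ≠ 1. Set z = x − y², z' = x − λy², F = x·z·z' in k[x,y]. Let Q be the 5×5 matrix over k[x,y] obtained from Q_a(2) by deleting its last row and last column, namely the matrix with rows (z, 0, 0, 0, 0), (0, xz, 0, 0, 0), (0, 0, xz, 0, 0), (−xy, 0, 0, xz', 0), (0, −xy, 0, 0, xz'). Then there exists a 5×5 matrix B over k[x,y] such that Q·B = B·Q = F·I₅; that is, (Q, B) is a matrix factorization of F (corresponding to the word r₃ − ã₂ ∼ a₂). -/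
open MvPolynomial

noncomputable section

namespace T36

variable {k : Type} [Field k]

/-- The matrix obtained from `Q_a(2)` by deleting its last row and last column
(corresponding to the word `r₃ − ã₂ ∼ a₂`). -/
def Qa2del6 (lam : k) : Matrix (Fin 5) (Fin 5) (MvPolynomial (Fin 2) k) :=
  !![z, 0, 0, 0, 0;
     0, x * z, 0, 0, 0;
     0, 0, x * z, 0, 0;
     -(x * y), 0, 0, x * z' lam, 0;
     0, -(x * y), 0, 0, x * z' lam]

end T36

theorem T36_Qa2_del_last_matrix_factorization (k : Type) [Field k] (lam : k)
    (h0 : lam ≠ 0) (h1 : lam ≠ 1) :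
    ∃ B : Matrix (Fin 5) (Fin 5) (MvPolynomial (Fin 2) k),
      T36.Qa2del6 lam * B = T36.F lam • (1 : Matrix (Fin 5) (Fin 5) (MvPolynomial (Fin 2) k)) ∧
      B * T36.Qa2del6 lam = T36.F lam • (1 : Matrix (Fin 5) (Fin 5) (MvPolynomial (Fin 2) k)) := by
  classical
  use !![T36.x * T36.z' lam, 0, 0, 0, 0;
        0, T36.z' lam, 0, 0, 0;
        0, 0, T36.z' lam, 0, 0;
        T36.x * T36.y, 0, 0, T36.z, 0;
        0, T36.y, 0, 0, T36.z]
  constructor <;>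
  · ext i j
    fin_cases i <;> fin_cases j <;>
      simp [T36.Qa2del6, T36.F, Matrix.mul_apply, Fin.sum_univ_succ,
        Matrix.one_apply] <;> ring
end
end

section
/- Let k be a field and λ ∈ k with λ ≠ 0 and λ ≠ 1. Set z = x − y², z' = x − λy², F = x·z·z' in k[x,y]. For every n ≥ 1, let Q_a(n) be the (2n+2)×(2n+2) matrix over k[x,y] defined by: the (1,1) entry is z; the (i,i) entries for 2 ≤ i ≤ n+1 are xz; the (i,i) entries for n+2 ≤ i ≤ 2n+2 are xz'; the (n+1+i, i) entries for 1 ≤ i ≤ n+1 are −xy; and all other entries are 0. Then for every n ≥ 1 there exists a (2n+2)×(2n+2) matrix B over k[x,y] such that Q_a(n)·B = B·Q_a(n) = F·I_{2n+2}; that is, (Q_a(n), B) is a matrix factorization of F. -/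
open MvPolynomial

noncomputable section

namespace T36

variable {k : Type} [Field k]

/-- The matrix `Q_a(n)` of size `(2n+2) × (2n+2)`: the `(1,1)` entry is `z`, the
diagonal entries in positions `2,…,n+1` are `xz`, the diagonal entries in positions
`n+2,…,2n+2` are `xz'`, the entries in positions `(n+1+i, i)` for `1 ≤ i ≤ n+1` are
`−xy`, and all other entries vanish (here positions are 1-based, while the
`Fin`-indices below are 0-based). -/
def Qa (lam : k) (n : ℕ) : Matrix (Fin (2 * n + 2)) (Fin (2 * n + 2)) (MvPolynomial (Fin 2) k) :=
  fun i j =>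
    if (i : ℕ) = (j : ℕ) then
      (if (i : ℕ) = 0 then z else if (i : ℕ) ≤ n then x * z else x * z' lam)
    else if (i : ℕ) = (j : ℕ) + (n + 1) then -(x * y) else 0

/-- The complementary factor `B`. -/
def Bm (lam : k) (n : ℕ) : Matrix (Fin (2 * n + 2)) (Fin (2 * n + 2)) (MvPolynomial (Fin 2) k) :=
  fun i j =>
    if (i : ℕ) = (j : ℕ) then
      (if (i : ℕ) = 0 then x * z' lam else if (i : ℕ) ≤ n then z' lam else z)
    else if (i : ℕ) = (j : ℕ) + (n + 1) then (if (j : ℕ) = 0 then x * y else y) else 0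

lemma mulQB (lam : k) (n : ℕ) :
    Qa lam n * Bm lam n = F lam • (1 : Matrix (Fin (2*n+2)) (Fin (2*n+2)) (MvPolynomial (Fin 2) k)) := by
  apply Matrix.ext
  intro i j
  rw [Matrix.mul_apply, Matrix.smul_apply, Matrix.one_apply, smul_eq_mul]
  by_cases hi : n + 1 ≤ (i : ℕ)
  · obtain ⟨i₀, hv⟩ : ∃ i₀ : Fin (2*n+2), (i₀ : ℕ) = (i : ℕ) - (n+1) :=
      ⟨⟨(i : ℕ) - (n+1), by omega⟩, rfl⟩
    have hne : i₀ ≠ i := fun h => by have := congrArg Fin.val h; omega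
    have hzero : ∀ l : Fin (2*n+2), l ≠ i₀ → l ≠ i →
        Qa lam n i l * Bm lam n l j = 0 := by
      intro l hl0 hli
      have : Qa lam n i l = 0 := by
        simp only [Qa]
        rw [if_neg (fun h => hli (Fin.ext h.symm)),
            if_neg (fun h => hl0 (Fin.ext (by omega)))]
      rw [this, zero_mul]
    rw [Fintype.sum_eq_add i₀ i hne (fun l hl => hzero l hl.1 hl.2)]
    have hQs : Qa lam n i i₀ = -(x * y) := by
      simp only [Qa]
      rw [if_neg (by omega), if_pos (by omega)]
    have hQd : Qa lam n i i = x * z' lam := by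
      simp only [Qa]
      rw [if_pos trivial, if_neg (by omega), if_neg (by omega)]
    rw [hQs, hQd]
    by_cases hj : (j : ℕ) = (i : ℕ)
    · have hBij : Bm lam n i j = z := by
        simp only [Bm]
        rw [if_pos (by omega), if_neg (by omega), if_neg (by omega)]
      have hB0j : Bm lam n i₀ j = 0 := by
        simp only [Bm]
        rw [if_neg (by omega), if_neg (by omega)]
      rw [hBij, hB0j, if_pos (Fin.ext hj.symm)]
      simp only [F]; ring
    · rw [if_neg (show ¬(i = j) from fun h => hj (congrArg Fin.val h.symm))]
      by_cases hj0 : (j : ℕ) = (i₀ : ℕ)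
      · have hBij : Bm lam n i j = (if (j : ℕ) = 0 then x * y else y) := by
          simp only [Bm]
          rw [if_neg (by omega), if_pos (by omega)]
        have hB0j : Bm lam n i₀ j = (if (i₀ : ℕ) = 0 then x * z' lam else z' lam) := by
          simp only [Bm]
          rw [if_pos (by omega)]
          by_cases h0 : (i₀ : ℕ) = 0
          · rw [if_pos h0, if_pos h0]
          · rw [if_neg h0, if_neg h0, if_pos (by omega)]
        rw [hBij, hB0j]
        by_cases h0 : (i₀ : ℕ) = 0
        · rw [if_pos h0, if_pos (by omega)]; ring
        · rw [if_neg h0, if_neg (by omega)]; ring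
      · have hBij : Bm lam n i j = 0 := by
          simp only [Bm]
          rw [if_neg (by omega), if_neg (by omega)]
        have hB0j : Bm lam n i₀ j = 0 := by
          simp only [Bm]
          rw [if_neg (by omega), if_neg (by omega)]
        rw [hBij, hB0j]; ring
  · have hzero : ∀ l : Fin (2*n+2), l ≠ i → Qa lam n i l * Bm lam n l j = 0 := by
      intro l hl
      have : Qa lam n i l = 0 := by
        simp only [Qa]
        rw [if_neg (fun h => hl (Fin.ext h.symm)), if_neg (by omega)]
      rw [this, zero_mul]
    rw [Fintype.sum_eq_single i hzero]
    by_cases hj : (j : ℕ) = (i : ℕ)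
    · rw [if_pos (Fin.ext hj.symm)]
      by_cases h0 : (i : ℕ) = 0
      · have hQ : Qa lam n i i = z := by
          simp only [Qa]; rw [if_pos trivial, if_pos h0]
        have hB : Bm lam n i j = x * z' lam := by
          simp only [Bm]; rw [if_pos (by omega), if_pos h0]
        rw [hQ, hB]; simp only [F]; ring
      · have hQ : Qa lam n i i = x * z := by
          simp only [Qa]; rw [if_pos trivial, if_neg h0, if_pos (by omega)]
        have hB : Bm lam n i j = z' lam := by
          simp only [Bm]; rw [if_pos (by omega), if_neg h0, if_pos (by omega)]
        rw [hQ, hB]; simp only [F]; ring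
    · rw [if_neg (show ¬(i = j) from fun h => hj (congrArg Fin.val h.symm))]
      have hB : Bm lam n i j = 0 := by
        simp only [Bm]
        rw [if_neg (by omega), if_neg (by omega)]
      rw [hB]; ring

lemma mulBQ (lam : k) (n : ℕ) :
    Bm lam n * Qa lam n = F lam • (1 : Matrix (Fin (2*n+2)) (Fin (2*n+2)) (MvPolynomial (Fin 2) k)) := by
  apply Matrix.ext
  intro i j
  rw [Matrix.mul_apply, Matrix.smul_apply, Matrix.one_apply, smul_eq_mul]
  by_cases hi : n + 1 ≤ (i : ℕ)
  · obtain ⟨i₀, hv⟩ : ∃ i₀ : Fin (2*n+2), (i₀ : ℕ) = (i : ℕ) - (n+1) :=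
      ⟨⟨(i : ℕ) - (n+1), by omega⟩, rfl⟩
    have hne : i₀ ≠ i := fun h => by have := congrArg Fin.val h; omega
    have hzero : ∀ l : Fin (2*n+2), l ≠ i₀ → l ≠ i →
        Bm lam n i l * Qa lam n l j = 0 := by
      intro l hl0 hli
      have : Bm lam n i l = 0 := by
        simp only [Bm]
        rw [if_neg (fun h => hli (Fin.ext h.symm)),
            if_neg (fun h => hl0 (Fin.ext (by omega)))]
      rw [this, zero_mul]
    rw [Fintype.sum_eq_add i₀ i hne (fun l hl => hzero l hl.1 hl.2)]
    have hBs : Bm lam n i i₀ = (if (i₀ : ℕ) = 0 then x * y else y) := by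
      simp only [Bm]
      rw [if_neg (by omega), if_pos (by omega)]
    have hBd : Bm lam n i i = z := by
      simp only [Bm]
      rw [if_pos trivial, if_neg (by omega), if_neg (by omega)]
    rw [hBs, hBd]
    by_cases hj : (j : ℕ) = (i : ℕ)
    · have hQij : Qa lam n i j = x * z' lam := by
        simp only [Qa]
        rw [if_pos (by omega), if_neg (by omega), if_neg (by omega)]
      have hQ0j : Qa lam n i₀ j = 0 := by
        simp only [Qa]
        rw [if_neg (by omega), if_neg (by omega)]
      rw [hQij, hQ0j, if_pos (Fin.ext hj.symm)]
      simp only [F]; ring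
    · rw [if_neg (show ¬(i = j) from fun h => hj (congrArg Fin.val h.symm))]
      by_cases hj0 : (j : ℕ) = (i₀ : ℕ)
      · have hQij : Qa lam n i j = -(x * y) := by
          simp only [Qa]
          rw [if_neg (by omega), if_pos (by omega)]
        have hQ0j : Qa lam n i₀ j = (if (i₀ : ℕ) = 0 then z else x * z) := by
          simp only [Qa]
          rw [if_pos (by omega)]
          by_cases h0 : (i₀ : ℕ) = 0
          · rw [if_pos h0, if_pos h0]
          · rw [if_neg h0, if_neg h0, if_pos (by omega)]
        rw [hQij, hQ0j]
        by_cases h0 : (i₀ : ℕ) = 0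
        · rw [if_pos h0, if_pos h0]; ring
        · rw [if_neg h0, if_neg h0]; ring
      · have hQij : Qa lam n i j = 0 := by
          simp only [Qa]
          rw [if_neg (by omega), if_neg (by omega)]
        have hQ0j : Qa lam n i₀ j = 0 := by
          simp only [Qa]
          rw [if_neg (by omega), if_neg (by omega)]
        rw [hQij, hQ0j]; ring
  · have hzero : ∀ l : Fin (2*n+2), l ≠ i → Bm lam n i l * Qa lam n l j = 0 := by
      intro l hl
      have : Bm lam n i l = 0 := by
        simp only [Bm]
        rw [if_neg (fun h => hl (Fin.ext h.symm)), if_neg (by omega)]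
      rw [this, zero_mul]
    rw [Fintype.sum_eq_single i hzero]
    by_cases hj : (j : ℕ) = (i : ℕ)
    · rw [if_pos (Fin.ext hj.symm)]
      by_cases h0 : (i : ℕ) = 0
      · have hB : Bm lam n i i = x * z' lam := by
          simp only [Bm]; rw [if_pos trivial, if_pos h0]
        have hQ : Qa lam n i j = z := by
          simp only [Qa]; rw [if_pos (by omega), if_pos h0]
        rw [hB, hQ]; simp only [F]; ring
      · have hB : Bm lam n i i = z' lam := by
          simp only [Bm]; rw [if_pos trivial, if_neg h0, if_pos (by omega)]
        have hQ : Qa lam n i j = x * z := by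
          simp only [Qa]; rw [if_pos (by omega), if_neg h0, if_pos (by omega)]
        rw [hB, hQ]; simp only [F]; ring
    · rw [if_neg (show ¬(i = j) from fun h => hj (congrArg Fin.val h.symm))]
      have hQ : Qa lam n i j = 0 := by
        simp only [Qa]
        rw [if_neg (by omega), if_neg (by omega)]
      rw [hQ]; ring

end T36

theorem T36_Qa_matrix_factorization (k : Type) [Field k] (lam : k)
    (h0 : lam ≠ 0) (h1 : lam ≠ 1) :
    ∀ n : ℕ, 1 ≤ n →
    ∃ B : Matrix (Fin (2 * n + 2)) (Fin (2 * n + 2)) (MvPolynomial (Fin 2) k),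
      T36.Qa lam n * B =
        T36.F lam • (1 : Matrix (Fin (2 * n + 2)) (Fin (2 * n + 2)) (MvPolynomial (Fin 2) k)) ∧
      B * T36.Qa lam n =
        T36.F lam • (1 : Matrix (Fin (2 * n + 2)) (Fin (2 * n + 2)) (MvPolynomial (Fin 2) k)) := by
  intro n _
  exact ⟨T36.Bm lam n, T36.mulQB lam n, T36.mulBQ lam n⟩
end
end

section
/- Let k be a field and λ ∈ k with λ ≠ 0 and λ ≠ 1. Set z = x − y², z' = x − λy², F = x·z·z' in k[x,y]. Let Q_b(2) be the 6×6 matrix over k[x,y] with rows (x, 0, 0, 0, 0, 0), (0, xz, 0, 0, 0, 0), (0, 0, xz, 0, 0, 0), (−xy, −xy, 0, xz', 0, 0), (0, 0, xy, 0, xz', 0), (−zy, −zy, zy, zz', zz', zz'). Then there exists a 6×6 matrix B over k[x,y] such that Q_b(2)·B = B·Q_b(2) = F·I₆; that is, (Q_b(2), B) is a matrix factorization of F. -/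
open MvPolynomial

noncomputable section

namespace T36

variable {k : Type} [Field k]

/-- The matrix `Q_b(2)`. -/
def Qb2 (lam : k) : Matrix (Fin 6) (Fin 6) (MvPolynomial (Fin 2) k) :=
  !![x, 0, 0, 0, 0, 0;
     0, x * z, 0, 0, 0, 0;
     0, 0, x * z, 0, 0, 0;
     -(x * y), -(x * y), 0, x * z' lam, 0, 0;
     0, 0, x * y, 0, x * z' lam, 0;
     -(z * y), -(z * y), z * y, z * z' lam, z * z' lam, z * z' lam]

/-- The complementary matrix. -/
def Bmat (lam : k) : Matrix (Fin 6) (Fin 6) (MvPolynomial (Fin 2) k) :=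
  !![z * z' lam, 0, 0, 0, 0, 0;
     0, z' lam, 0, 0, 0, 0;
     0, 0, z' lam, 0, 0, 0;
     y * z, y, 0, z, 0, 0;
     0, 0, -y, 0, z, 0;
     0, 0, 0, -z, -z, x]

end T36

@[simp] lemma T36.cons_val_five {α : Type*} (x : α) (u : Fin 5 → α) :
    Matrix.vecCons x u 5 = u 4 := rfl

set_option maxHeartbeats 2000000 in
theorem T36_Qb2_matrix_factorization (k : Type) [Field k] (lam : k)
    (h0 : lam ≠ 0) (h1 : lam ≠ 1) :
    ∃ B : Matrix (Fin 6) (Fin 6) (MvPolynomial (Fin 2) k),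
      T36.Qb2 lam * B = T36.F lam • (1 : Matrix (Fin 6) (Fin 6) (MvPolynomial (Fin 2) k)) ∧
      B * T36.Qb2 lam = T36.F lam • (1 : Matrix (Fin 6) (Fin 6) (MvPolynomial (Fin 2) k)) := by
  refine ⟨T36.Bmat lam, ?_, ?_⟩ <;>
  · apply Matrix.ext
    intro i j
    fin_cases i <;> fin_cases j <;>
      simp [T36.Qb2, T36.Bmat, T36.F, T36.z, Matrix.mul_apply, Fin.sum_univ_six,
        Matrix.one_apply, Matrix.cons_val_two, Matrix.cons_val_three, Matrix.cons_val_four,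
        Matrix.head_cons, Matrix.head_fin_const, Matrix.vecHead, Matrix.vecTail] <;> ring
end
end

section
/- Let k be a field and λ ∈ k with λ ≠ 0 and λ ≠ 1. Set z = x − y², z' = x − λy², F = x·z·z' in k[x,y]. Let Q_d(2) be the 8×8 matrix over k[x,y] with rows (z, 0, 0, 0, 0, 0, 0, 0), (0, xz, 0, 0, 0, 0, 0, 0), (0, 0, xz, 0, 0, 0, 0, 0), (0, 0, 0, xz, 0, 0, 0, 0), (−x, 0, 0, 0, xz', 0, 0, 0), (0, 0, 0, −xy, 0, xz', 0, 0), (0, 0, 0, −xy, 0, 0, xz', 0), (0, 0, −xy, 0, 0, 0, 0, xz'). Then there exists an 8×8 matrix B over k[x,y] such that Q_d(2)·B = B·Q_d(2) = F·I₈; that is, (Q_d(2), B) is a matrix factorization of F. -/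
open MvPolynomial

noncomputable section

namespace T36

variable {k : Type} [Field k]

/-- The matrix `Q_d(2)`. -/
def Qd2 (lam : k) : Matrix (Fin 8) (Fin 8) (MvPolynomial (Fin 2) k) :=
  !![z, 0, 0, 0, 0, 0, 0, 0;
     0, x * z, 0, 0, 0, 0, 0, 0;
     0, 0, x * z, 0, 0, 0, 0, 0;
     0, 0, 0, x * z, 0, 0, 0, 0;
     -x, 0, 0, 0, x * z' lam, 0, 0, 0;
     0, 0, 0, -(x * y), 0, x * z' lam, 0, 0;
     0, 0, 0, -(x * y), 0, 0, x * z' lam, 0;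
     0, 0, -(x * y), 0, 0, 0, 0, x * z' lam]

end T36

namespace T36
variable {k : Type} [Field k]
/-- Cofactor matrix. -/
def Bd2 (lam : k) : Matrix (Fin 8) (Fin 8) (MvPolynomial (Fin 2) k) :=
  !![x * z' lam, 0, 0, 0, 0, 0, 0, 0;
     0, z' lam, 0, 0, 0, 0, 0, 0;
     0, 0, z' lam, 0, 0, 0, 0, 0;
     0, 0, 0, z' lam, 0, 0, 0, 0;
     x, 0, 0, 0, z, 0, 0, 0;
     0, 0, 0, y, 0, z, 0, 0;
     0, 0, 0, y, 0, 0, z, 0;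
     0, 0, y, 0, 0, 0, 0, z]
end T36

theorem cv5 {α : Type*} {m : ℕ} (x : α) (u : Fin (m + 5) → α) :
    Matrix.vecCons x u 5 = Matrix.vecHead (Matrix.vecTail (Matrix.vecTail (Matrix.vecTail (Matrix.vecTail u)))) := rfl
theorem cv6 {α : Type*} {m : ℕ} (x : α) (u : Fin (m + 6) → α) :
    Matrix.vecCons x u 6 = Matrix.vecHead (Matrix.vecTail (Matrix.vecTail (Matrix.vecTail (Matrix.vecTail (Matrix.vecTail u))))) := rfl
theorem cv7 {α : Type*} {m : ℕ} (x : α) (u : Fin (m + 7) → α) :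
    Matrix.vecCons x u 7 = Matrix.vecHead (Matrix.vecTail (Matrix.vecTail (Matrix.vecTail (Matrix.vecTail (Matrix.vecTail (Matrix.vecTail u)))))) := rfl

set_option maxHeartbeats 2000000 in
theorem T36_Qd2_matrix_factorization (k : Type) [Field k] (lam : k)
    (h0 : lam ≠ 0) (h1 : lam ≠ 1) :
    ∃ B : Matrix (Fin 8) (Fin 8) (MvPolynomial (Fin 2) k),
      T36.Qd2 lam * B = T36.F lam • (1 : Matrix (Fin 8) (Fin 8) (MvPolynomial (Fin 2) k)) ∧
      B * T36.Qd2 lam = T36.F lam • (1 : Matrix (Fin 8) (Fin 8) (MvPolynomial (Fin 2) k)) := by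
  refine ⟨T36.Bd2 lam, Matrix.ext fun i j => ?_, Matrix.ext fun i j => ?_⟩ <;>
    fin_cases i <;> fin_cases j <;>
      simp [T36.Qd2, T36.Bd2, T36.F, Matrix.mul_apply, Fin.sum_univ_eight,
        Matrix.one_apply, cv5, cv6, cv7, Matrix.vecHead, Matrix.vecTail] <;> ring
end
end

section
/- Let k be a field and λ ∈ k with λ ≠ 0 and λ ≠ 1. Set z = x − y², z' = x − λy², F = x·z·z' in k[x,y]. Let Q_c'(2) be the 8×8 matrix over k[x,y] with rows (x, 0, 0, 0, 0, 0, 0, 0), (0, z, 0, 0, 0, 0, 0, 0), (0, 0, xz, 0, 0, 0, 0, 0), (0, 0, 0, xz, 0, 0, 0, 0), (0, 0, 0, 0, xzz', 0, 0, 0), (0, 0, 0, −xy, 0, xz', 0, 0), (0, 0, −xy, 0, 0, 0, xz', 0), (−xy, −xy, 0, 0, −xyz', 0, 0, xz'). Then there exists an 8×8 matrix B over k[x,y] such that Q_c'(2)·B = B·Q_c'(2) = F·I₈; that is, (Q_c'(2), B) is a matrix factorization of F. -/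
open MvPolynomial

noncomputable section

namespace T36

variable {k : Type} [Field k]

/-- The matrix `Q_c'(2)`. -/
def Qc'2 (lam : k) : Matrix (Fin 8) (Fin 8) (MvPolynomial (Fin 2) k) :=
  !![x, 0, 0, 0, 0, 0, 0, 0;
     0, z, 0, 0, 0, 0, 0, 0;
     0, 0, x * z, 0, 0, 0, 0, 0;
     0, 0, 0, x * z, 0, 0, 0, 0;
     0, 0, 0, 0, x * z * z' lam, 0, 0, 0;
     0, 0, 0, -(x * y), 0, x * z' lam, 0, 0;
     0, 0, -(x * y), 0, 0, 0, x * z' lam, 0;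
     -(x * y), -(x * y), 0, 0, -(x * y * z' lam), 0, 0, x * z' lam]

end T36

section VecAux
variable {α : Type*}
@[simp] lemma consval_2_1 (x : α) (u : Fin 1 → α) : Matrix.vecCons x u (1 : Fin 2) = u 0 := rfl
@[simp] lemma consval_3_1 (x : α) (u : Fin 2 → α) : Matrix.vecCons x u (1 : Fin 3) = u 0 := rfl
@[simp] lemma consval_3_2 (x : α) (u : Fin 2 → α) : Matrix.vecCons x u (2 : Fin 3) = u 1 := rfl
@[simp] lemma consval_4_1 (x : α) (u : Fin 3 → α) : Matrix.vecCons x u (1 : Fin 4) = u 0 := rfl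
@[simp] lemma consval_4_2 (x : α) (u : Fin 3 → α) : Matrix.vecCons x u (2 : Fin 4) = u 1 := rfl
@[simp] lemma consval_4_3 (x : α) (u : Fin 3 → α) : Matrix.vecCons x u (3 : Fin 4) = u 2 := rfl
@[simp] lemma consval_5_1 (x : α) (u : Fin 4 → α) : Matrix.vecCons x u (1 : Fin 5) = u 0 := rfl
@[simp] lemma consval_5_2 (x : α) (u : Fin 4 → α) : Matrix.vecCons x u (2 : Fin 5) = u 1 := rfl
@[simp] lemma consval_5_3 (x : α) (u : Fin 4 → α) : Matrix.vecCons x u (3 : Fin 5) = u 2 := rfl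
@[simp] lemma consval_5_4 (x : α) (u : Fin 4 → α) : Matrix.vecCons x u (4 : Fin 5) = u 3 := rfl
@[simp] lemma consval_6_1 (x : α) (u : Fin 5 → α) : Matrix.vecCons x u (1 : Fin 6) = u 0 := rfl
@[simp] lemma consval_6_2 (x : α) (u : Fin 5 → α) : Matrix.vecCons x u (2 : Fin 6) = u 1 := rfl
@[simp] lemma consval_6_3 (x : α) (u : Fin 5 → α) : Matrix.vecCons x u (3 : Fin 6) = u 2 := rfl
@[simp] lemma consval_6_4 (x : α) (u : Fin 5 → α) : Matrix.vecCons x u (4 : Fin 6) = u 3 := rfl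
@[simp] lemma consval_6_5 (x : α) (u : Fin 5 → α) : Matrix.vecCons x u (5 : Fin 6) = u 4 := rfl
@[simp] lemma consval_7_1 (x : α) (u : Fin 6 → α) : Matrix.vecCons x u (1 : Fin 7) = u 0 := rfl
@[simp] lemma consval_7_2 (x : α) (u : Fin 6 → α) : Matrix.vecCons x u (2 : Fin 7) = u 1 := rfl
@[simp] lemma consval_7_3 (x : α) (u : Fin 6 → α) : Matrix.vecCons x u (3 : Fin 7) = u 2 := rfl
@[simp] lemma consval_7_4 (x : α) (u : Fin 6 → α) : Matrix.vecCons x u (4 : Fin 7) = u 3 := rfl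
@[simp] lemma consval_7_5 (x : α) (u : Fin 6 → α) : Matrix.vecCons x u (5 : Fin 7) = u 4 := rfl
@[simp] lemma consval_7_6 (x : α) (u : Fin 6 → α) : Matrix.vecCons x u (6 : Fin 7) = u 5 := rfl
@[simp] lemma consval_8_1 (x : α) (u : Fin 7 → α) : Matrix.vecCons x u (1 : Fin 8) = u 0 := rfl
@[simp] lemma consval_8_2 (x : α) (u : Fin 7 → α) : Matrix.vecCons x u (2 : Fin 8) = u 1 := rfl
@[simp] lemma consval_8_3 (x : α) (u : Fin 7 → α) : Matrix.vecCons x u (3 : Fin 8) = u 2 := rfl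
@[simp] lemma consval_8_4 (x : α) (u : Fin 7 → α) : Matrix.vecCons x u (4 : Fin 8) = u 3 := rfl
@[simp] lemma consval_8_5 (x : α) (u : Fin 7 → α) : Matrix.vecCons x u (5 : Fin 8) = u 4 := rfl
@[simp] lemma consval_8_6 (x : α) (u : Fin 7 → α) : Matrix.vecCons x u (6 : Fin 8) = u 5 := rfl
@[simp] lemma consval_8_7 (x : α) (u : Fin 7 → α) : Matrix.vecCons x u (7 : Fin 8) = u 6 := rfl
end VecAux

set_option maxHeartbeats 1600000 in
theorem T36_Qc'2_matrix_factorization (k : Type) [Field k] (lam : k)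
    (h0 : lam ≠ 0) (h1 : lam ≠ 1) :
    ∃ B : Matrix (Fin 8) (Fin 8) (MvPolynomial (Fin 2) k),
      T36.Qc'2 lam * B = T36.F lam • (1 : Matrix (Fin 8) (Fin 8) (MvPolynomial (Fin 2) k)) ∧
      B * T36.Qc'2 lam = T36.F lam • (1 : Matrix (Fin 8) (Fin 8) (MvPolynomial (Fin 2) k)) := by
  refine ⟨!![T36.z * T36.z' lam, 0, 0, 0, 0, 0, 0, 0;
     0, T36.x * T36.z' lam, 0, 0, 0, 0, 0, 0;
     0, 0, T36.z' lam, 0, 0, 0, 0, 0;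
     0, 0, 0, T36.z' lam, 0, 0, 0, 0;
     0, 0, 0, 0, 1, 0, 0, 0;
     0, 0, 0, T36.y, 0, T36.z, 0, 0;
     0, 0, T36.y, 0, 0, 0, T36.z, 0;
     T36.y * T36.z, T36.x * T36.y, 0, 0, T36.y, 0, 0, T36.z], ?_, ?_⟩ <;>
  · rw [← Matrix.ext_iff]
    intro i j
    fin_cases i <;> fin_cases j <;>
      simp [T36.Qc'2, T36.F, Matrix.mul_apply, Fin.sum_univ_eight, Matrix.one_apply,
            Matrix.vecHead, Matrix.vecTail] <;>
      first
        | ring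
        | skip
end
end
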